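/- Let φ : ℝ³ → ℝ be φ(q₁,q₂,u) = 1 + 2q₁ cos u + 2q₂ sin u, let Ω = {(q₁,q₂,u) ∈ ℝ³ : φ(q₁,q₂,u) > 0}, and let h be the vector field on Ω defined by h(q₁,q₂,u) = ((cos u)/φ, (sin u)/φ, 0). Then on Ω: (i) the Lie derivative L_h φ equals 2/φ; (ii) the Schwarzian derivative S(φ) := φ · L_h(L_h φ / 2) − (L_h φ / 2)² equals −3/φ²; and (iii) consequently the control curvature κ = φ⁻²·(−S(φ)) equals 3(1 + 2q₁ cos u + 2q₂ sin u)⁻⁴, which is strictly positive on Ω. -/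

import Mathlib

open Set Real

noncomputable section

/-- `φ(q₁,q₂,u) = 1 + 2 q₁ cos u + 2 q₂ sin u`, for the co-Zermelo problem on the
Euclidean plane with drift one-form `Υ = d(q₁² + q₂²)`.  Points of `ℝ³` are written
`p = ((q₁,q₂),u)`. -/
def phiCZ : (ℝ × ℝ) × ℝ → ℝ :=
  fun p => 1 + 2 * p.1.1 * Real.cos p.2 + 2 * p.1.2 * Real.sin p.2

/-- The domain `Ω = {φ > 0}`. -/
def OmegaCZ : Set ((ℝ × ℝ) × ℝ) := {p | 0 < phiCZ p}

/-- The Hamiltonian vector field `h = ((cos u)/φ, (sin u)/φ, 0)` on `Ω`. -/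
def hamCZ : (ℝ × ℝ) × ℝ → (ℝ × ℝ) × ℝ :=
  fun p => ((Real.cos p.2 / phiCZ p, Real.sin p.2 / phiCZ p), 0)

/-- The Lie derivative `L_h a` of a function `a` along the field `h`. -/
def LhCZ (a : (ℝ × ℝ) × ℝ → ℝ) : (ℝ × ℝ) × ℝ → ℝ :=
  fun p => fderiv ℝ a p (hamCZ p)

/-- The Schwarzian derivative `S(φ) = φ · L_h(L_h φ / 2) − (L_h φ / 2)²`. -/
def SchwarzCZ : (ℝ × ℝ) × ℝ → ℝ :=
  fun p => phiCZ p * LhCZ (fun x => LhCZ phiCZ x / 2) p - (LhCZ phiCZ p / 2) ^ 2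

end

noncomputable section CoZermeloAux

-- auxiliary
def L1 : ((ℝ × ℝ) × ℝ) →L[ℝ] ℝ :=
  (ContinuousLinearMap.fst ℝ ℝ ℝ).comp (ContinuousLinearMap.fst ℝ (ℝ × ℝ) ℝ)
def L2 : ((ℝ × ℝ) × ℝ) →L[ℝ] ℝ :=
  (ContinuousLinearMap.snd ℝ ℝ ℝ).comp (ContinuousLinearMap.fst ℝ (ℝ × ℝ) ℝ)
def L3 : ((ℝ × ℝ) × ℝ) →L[ℝ] ℝ := ContinuousLinearMap.snd ℝ (ℝ × ℝ) ℝ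

def DphiCZ (p : (ℝ × ℝ) × ℝ) : ((ℝ × ℝ) × ℝ) →L[ℝ] ℝ :=
  ((2 * Real.cos p.2) • L1 + (2 * p.1.1) • ((-Real.sin p.2) • L3)) +
    ((2 * Real.sin p.2) • L2 + (2 * p.1.2) • ((Real.cos p.2) • L3))

lemma hasFDerivAt_phiCZ (p : (ℝ × ℝ) × ℝ) : HasFDerivAt phiCZ (DphiCZ p) p := by
  have hq1 : HasFDerivAt (fun x : (ℝ × ℝ) × ℝ => x.1.1) L1 p := L1.hasFDerivAt
  have hq2 : HasFDerivAt (fun x : (ℝ × ℝ) × ℝ => x.1.2) L2 p := L2.hasFDerivAt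
  have hu : HasFDerivAt (fun x : (ℝ × ℝ) × ℝ => x.2) L3 p := L3.hasFDerivAt
  have hcos : HasFDerivAt (fun x : (ℝ × ℝ) × ℝ => Real.cos x.2)
      ((-Real.sin p.2) • L3) p :=
    (Real.hasDerivAt_cos p.2).comp_hasFDerivAt p hu
  have hsin : HasFDerivAt (fun x : (ℝ × ℝ) × ℝ => Real.sin x.2)
      ((Real.cos p.2) • L3) p :=
    (Real.hasDerivAt_sin p.2).comp_hasFDerivAt p hu
  have h1 : HasFDerivAt (fun x : (ℝ × ℝ) × ℝ => 2 * x.1.1 * Real.cos x.2)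
      ((2 * Real.cos p.2) • L1 + (2 * p.1.1) • ((-Real.sin p.2) • L3)) p := by
    refine ((hq1.const_mul 2).mul hcos).congr_fderiv ?_
    refine ContinuousLinearMap.ext fun v => ?_
    simp [ContinuousLinearMap.smul_apply]
    ring
  have h2 : HasFDerivAt (fun x : (ℝ × ℝ) × ℝ => 2 * x.1.2 * Real.sin x.2)
      ((2 * Real.sin p.2) • L2 + (2 * p.1.2) • ((Real.cos p.2) • L3)) p := by
    refine ((hq2.const_mul 2).mul hsin).congr_fderiv ?_
    refine ContinuousLinearMap.ext fun v => ?_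
    simp [ContinuousLinearMap.smul_apply]
    ring
  exact ((h1.const_add 1).add h2).congr_fderiv rfl

lemma DphiCZ_apply (p v : (ℝ × ℝ) × ℝ) :
    DphiCZ p v = 2 * Real.cos p.2 * v.1.1 + 2 * Real.sin p.2 * v.1.2 +
      (-(2 * p.1.1 * Real.sin p.2) + 2 * p.1.2 * Real.cos p.2) * v.2 := by
  simp [DphiCZ, L1, L2, L3]
  ring

lemma Lh_phi (p : (ℝ × ℝ) × ℝ) : LhCZ phiCZ p = 2 / phiCZ p := by
  rw [LhCZ, (hasFDerivAt_phiCZ p).fderiv, DphiCZ_apply]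
  simp only [hamCZ]
  by_cases h : phiCZ p = 0
  · simp [h]
  · field_simp
    ring_nf
    nlinarith [Real.sin_sq_add_cos_sq p.2]

lemma Lh_phi_half : (fun x => LhCZ phiCZ x / 2) = fun x => (phiCZ x)⁻¹ := by
  funext x
  rw [Lh_phi, div_right_comm]
  norm_num

lemma Schwarz_eq (p : (ℝ × ℝ) × ℝ) (hp : phiCZ p ≠ 0) :
    SchwarzCZ p = -3 / phiCZ p ^ 2 := by
  have hinv : HasFDerivAt (fun x => (phiCZ x)⁻¹)
      ((-(phiCZ p ^ 2)⁻¹) • DphiCZ p) p :=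
    (hasDerivAt_inv hp).comp_hasFDerivAt p (hasFDerivAt_phiCZ p)
  have key : DphiCZ p (hamCZ p) = 2 / phiCZ p := by
    rw [← (hasFDerivAt_phiCZ p).fderiv]; exact Lh_phi p
  have h2 : LhCZ (fun x => LhCZ phiCZ x / 2) p = -2 / phiCZ p ^ 3 := by
    rw [Lh_phi_half, LhCZ, hinv.fderiv]
    rw [ContinuousLinearMap.smul_apply, key, smul_eq_mul]
    field_simp
  rw [SchwarzCZ, h2, Lh_phi]
  field_simp
  ring

end CoZermeloAux

/-- **A straight-line system with nonzero curvature.** On `Ω = {φ > 0}`: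
(i) `L_h φ = 2/φ`; (ii) `S(φ) = −3/φ²`; (iii) the control curvature
`κ = φ⁻²·(−S(φ))` equals `3 (1 + 2q₁ cos u + 2q₂ sin u)⁻⁴` and is strictly positive. -/
theorem coZermelo_curvature_positive :
    ∀ p ∈ OmegaCZ,
      LhCZ phiCZ p = 2 / phiCZ p ∧
      SchwarzCZ p = -3 / phiCZ p ^ 2 ∧
      (phiCZ p ^ 2)⁻¹ * (-SchwarzCZ p)
        = 3 * ((1 + 2 * p.1.1 * Real.cos p.2 + 2 * p.1.2 * Real.sin p.2) ^ 4)⁻¹ ∧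
      0 < (phiCZ p ^ 2)⁻¹ * (-SchwarzCZ p) := by
  intro p hp
  have hpos : 0 < phiCZ p := hp
  have hne : phiCZ p ≠ 0 := ne_of_gt hpos
  have hS := Schwarz_eq p hne
  refine ⟨Lh_phi p, hS, ?_, ?_⟩
  · rw [hS]
    show (phiCZ p ^ 2)⁻¹ * (-(-3 / phiCZ p ^ 2)) = 3 * ((phiCZ p) ^ 4)⁻¹
    field_simp
  · rw [hS]
    have : (phiCZ p ^ 2)⁻¹ * (-(-3 / phiCZ p ^ 2)) = 3 / phiCZ p ^ 4 := by
      field_simp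
    rw [this]
    positivity
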